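/- For each integer t ≥ 1, let H_t be the graph obtained from 2t+1 pairwise disjoint triangles T_1,…,T_{2t+1} and one additional vertex v by joining v by an edge to exactly one vertex of each triangle. Then the flow spectrum of H_t is S(H_t) = {3 + 2/t} and the integer flow spectrum is S̄(H_t) = {5}. Moreover, for a signature σ making (H_t,σ) flow-admissible, H_t admits an integer nowhere-zero 5-flow φ with φ(e) ∈ {1,2,4} for every edge e, and a nowhere-zero (3 + 2/t)-flow φ_c with φ_c(e) ∈ {1, 1+1/t, 2, 2+2/t} for every edge e. -/

import Mathlib

open Finset

/-- A finite loopless multigraph with vertex type `V` and edge type `E`;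
`ends e` is the unordered pair of the two distinct endpoints of the edge `e`. -/
structure Multigraph (V E : Type) where
  ends : E → Sym2 V
  not_loop : ∀ e, ¬ (ends e).IsDiag

namespace Multigraph

variable {V E : Type} [Fintype V] [Fintype E] [DecidableEq V] [DecidableEq E]

/-- The edge `e` is incident with the vertex `v`. -/
def Inc (G : Multigraph V E) (v : V) (e : E) : Prop := v ∈ G.ends e

instance (G : Multigraph V E) (v : V) (e : E) : Decidable (G.Inc v e) :=
  inferInstanceAs (Decidable (v ∈ G.ends e))

/-- The set of edges incident with `v`. -/
def incEdges (G : Multigraph V E) (v : V) : Finset E :=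
  Finset.univ.filter fun e => G.Inc v e

/-- The degree of a vertex. -/
def degree (G : Multigraph V E) (v : V) : ℕ := (G.incEdges v).card

/-- `G` is `k`-regular. -/
def IsRegular (G : Multigraph V E) (k : ℕ) : Prop := ∀ v, G.degree v = k

/-- The set `N_σ` of negative edges of a signature `σ : E → ℤˣ`. -/
def negEdges (G : Multigraph V E) (σ : E → ℤˣ) : Finset E :=
  Finset.univ.filter fun e => σ e = -1

/-- `τ` assigns a sign to every half-edge (i.e. to each edge at each of its endpoints);
it is an orientation of the signed graph `(G, σ)` if for every edge `e = uv` the two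
half-edge signs multiply to `-σ e`. -/
def IsOrientation (G : Multigraph V E) (σ : E → ℤˣ) (τ : E → V → ℤˣ) : Prop :=
  ∀ e u v, G.ends e = s(u, v) → τ e u * τ e v = - σ e

/-- The boundary `δf(v) = ∑_{h at v} τ(h) f(e_h)` of `f` at `v`. -/
def boundary {R : Type} [CommRing R] (G : Multigraph V E) (τ : E → V → ℤˣ)
    (f : E → R) (v : V) : R :=
  ∑ e ∈ G.incEdges v, (((τ e v : ℤˣ) : ℤ) : R) * f e

/-- `f` is a nowhere-zero `r`-flow on the signed graph `(G, σ)`: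
for some orientation all boundaries vanish and `1 ≤ |f e| ≤ r - 1` for every edge. -/
def IsNZFlow (G : Multigraph V E) (σ : E → ℤˣ) (r : ℝ) (f : E → ℝ) : Prop :=
  ∃ τ, G.IsOrientation σ τ ∧ (∀ v, G.boundary τ f v = 0) ∧
    ∀ e, 1 ≤ |f e| ∧ |f e| ≤ r - 1

/-- `(G, σ)` admits a nowhere-zero `r`-flow. -/
def HasNZFlow (G : Multigraph V E) (σ : E → ℤˣ) (r : ℝ) : Prop :=
  ∃ f, G.IsNZFlow σ r f

/-- `f` is a modular nowhere-zero `r`-flow on `(G, σ)`: for some orientation all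
boundaries are `≡ 0 (mod r)` and `1 ≤ |f e| ≤ r - 1` for every edge. -/
def IsModularNZFlow (G : Multigraph V E) (σ : E → ℤˣ) (r : ℝ) (f : E → ℝ) : Prop :=
  ∃ τ, G.IsOrientation σ τ ∧ (∀ v, ∃ k : ℤ, G.boundary τ f v = k * r) ∧
    ∀ e, 1 ≤ |f e| ∧ |f e| ≤ r - 1

/-- `f` is an integer-valued nowhere-zero `n`-flow on `(G, σ)`. -/
def IsIntNZFlow (G : Multigraph V E) (σ : E → ℤˣ) (n : ℕ) (f : E → ℤ) : Prop :=
  ∃ τ, G.IsOrientation σ τ ∧ (∀ v, G.boundary τ f v = 0) ∧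
    ∀ e, 1 ≤ |f e| ∧ |f e| ≤ (n : ℤ) - 1

/-- `(G, σ)` admits an integer nowhere-zero `n`-flow. -/
def HasIntNZFlow (G : Multigraph V E) (σ : E → ℤˣ) (n : ℕ) : Prop :=
  ∃ f, G.IsIntNZFlow σ n f

/-- `(G, σ)` is flow-admissible: it has a nowhere-zero `r`-flow for some `r ≥ 2`. -/
def FlowAdmissible (G : Multigraph V E) (σ : E → ℤˣ) : Prop :=
  ∃ r : ℝ, 2 ≤ r ∧ G.HasNZFlow σ r

/-- The circular flow number `F_c(G, σ)` (the least `r` admitting a nowhere-zero `r`-flow). -/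
noncomputable def Fc (G : Multigraph V E) (σ : E → ℤˣ) : ℝ :=
  sInf {r : ℝ | 2 ≤ r ∧ G.HasNZFlow σ r}

/-- The integer flow number `F(G, σ)` (the least `n` admitting an integer
nowhere-zero `n`-flow). -/
noncomputable def Fi (G : Multigraph V E) (σ : E → ℤˣ) : ℕ :=
  sInf {n : ℕ | G.HasIntNZFlow σ n}

/-- The flow spectrum `S(G)` of `G`. -/
def Spectrum (G : Multigraph V E) : Set ℝ :=
  {r | ∃ σ : E → ℤˣ, G.FlowAdmissible σ ∧ G.Fc σ = r}

/-- The integer flow spectrum `S̄(G)` of `G`. -/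
def IntSpectrum (G : Multigraph V E) : Set ℕ :=
  {n | ∃ σ : E → ℤˣ, G.FlowAdmissible σ ∧ G.Fi σ = n}

/-- `F` is the edge set of a spanning `t`-regular subgraph (a `t`-factor) of `G`. -/
def IsFactor (G : Multigraph V E) (t : ℕ) (F : Finset E) : Prop :=
  ∀ v, (G.incEdges v ∩ F).card = t

/-- `G` has a `t`-factor. -/
def HasFactor (G : Multigraph V E) (t : ℕ) : Prop := ∃ F, G.IsFactor t F

/-- `G - X` is bipartite. -/
def BipartiteOff (G : Multigraph V E) (X : Finset E) : Prop :=
  ∃ c : V → Bool, ∀ e ∉ X, ∀ u v, G.ends e = s(u, v) → c u ≠ c v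

/-- `G` is bipartite. -/
def Bipartite (G : Multigraph V E) : Prop := G.BipartiteOff ∅

/-- `X` is an `r`-minimal set: some signature `σ` with `N_σ = X` has circular flow
number `r`, while no signature whose negative edge set is a proper subset of `X`
has circular flow number `r`. -/
def IsRMinimal (G : Multigraph V E) (r : ℝ) (X : Finset E) : Prop :=
  (∃ σ, G.negEdges σ = X ∧ G.FlowAdmissible σ ∧ G.Fc σ = r) ∧
  ∀ σ, G.negEdges σ ⊂ X → ¬ (G.FlowAdmissible σ ∧ G.Fc σ = r)

/-- `X` is an `r`-minimal set of minimum cardinality. -/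
def IsSmallestRMinimal (G : Multigraph V E) (r : ℝ) (X : Finset E) : Prop :=
  G.IsRMinimal r X ∧ ∀ Y, G.IsRMinimal r Y → X.card ≤ Y.card

end Multigraph

open Multigraph

/-- The graph `H_t`: `2t+1` disjoint triangles `T_1, …, T_{2t+1}` together with one
additional vertex `v` (here `none`) joined by an edge to exactly one vertex of each
triangle.  Triangle `i` has vertices `some (i, j)` (`j : Fin 3`) and edges
`Sum.inl (i, j)` joining `some (i, j)` and `some (i, j+1)`; the bridge `Sum.inr i`
joins `none` to `some (i, 0)`. -/
def Htri (t : ℕ) :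
    Multigraph (Option (Fin (2 * t + 1) × Fin 3)) ((Fin (2 * t + 1) × Fin 3) ⊕ Fin (2 * t + 1)) where
  ends := fun e =>
    match e with
    | Sum.inl (i, j) => s(some (i, j), some (i, j + 1))
    | Sum.inr i => s(none, some (i, 0))
  not_loop := by
    rintro (⟨i, j⟩ | i) h
    · rw [Sym2.mk_isDiag_iff] at h
      simp only [Option.some.injEq, Prod.mk.injEq] at h
      have h2 := congrArg Fin.val h.2
      simp only [Fin.val_add, Fin.val_one] at h2
      have := j.isLt
      omega
    · rw [Sym2.mk_isDiag_iff] at h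
      simp at h

namespace HtriProof

open Multigraph

lemma usq {R : Type} [Ring R] (u : ℤˣ) : ((u : ℤ) : R) * ((u : ℤ) : R) = 1 := by
  rcases Int.units_eq_one_or u with h | h <;> simp [h]

lemma uabs {R : Type} [Ring R] [LinearOrder R] [IsStrictOrderedRing R] (u : ℤˣ) : |((u : ℤ) : R)| = 1 := by
  rcases Int.units_eq_one_or u with h | h <;> simp [h]

lemma units3 (a b c : ℤˣ) (h : a*b*c = 1) : b*c = a := by
  rcases Int.units_eq_one_or a with ha|ha <;> rcases Int.units_eq_one_or b with hb|hb <;>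
    rcases Int.units_eq_one_or c with hc|hc <;> subst ha hb hc <;> first | rfl | exact absurd h (by decide)

lemma units3' (a b c : ℤˣ) (h : a*b*c = -1) : b*c = -a := by
  rcases Int.units_eq_one_or a with ha|ha <;> rcases Int.units_eq_one_or b with hb|hb <;>
    rcases Int.units_eq_one_or c with hc|hc <;> subst ha hb hc <;> first | rfl | exact absurd h (by decide)

lemma fin3_sum {M : Type} [AddCommMonoid M] (j : Fin 3) (g : Fin 3 → M) :
    ∑ j' : Fin 3, (if j' = j ∨ j' = j + 2 then g j' else 0) = g j + g (j + 2) := by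
  fin_cases j <;> simp [Fin.sum_univ_three] <;> exact add_comm _ _

variable {t : ℕ}

lemma inc_none_inl (p : Fin (2*t+1) × Fin 3) : ¬ (Htri t).Inc none (Sum.inl p) := by
  obtain ⟨i, j⟩ := p
  simp [Multigraph.Inc, Htri]

lemma inc_none_inr (i : Fin (2*t+1)) : (Htri t).Inc none (Sum.inr i) := by
  simp [Multigraph.Inc, Htri]

lemma fin3_aux : ∀ a b : Fin 3, (a = b + 1 ↔ b = a + 2) := by decide

lemma inc_some_inl (i : Fin (2*t+1)) (j : Fin 3) (i' : Fin (2*t+1)) (j' : Fin 3) :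
    (Htri t).Inc (some (i, j)) (Sum.inl (i', j')) ↔ i' = i ∧ (j' = j ∨ j' = j + 2) := by
  simp only [Multigraph.Inc, Htri, Sym2.mem_iff, Option.some.injEq, Prod.mk.injEq]
  constructor
  · rintro (⟨rfl, rfl⟩ | ⟨rfl, h⟩)
    · exact ⟨rfl, Or.inl rfl⟩
    · exact ⟨rfl, Or.inr ((fin3_aux _ _).mp h)⟩
  · rintro ⟨rfl, (rfl | rfl)⟩
    · exact Or.inl ⟨rfl, rfl⟩
    · exact Or.inr ⟨rfl, (fin3_aux _ _).mpr rfl⟩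

lemma inc_some_inr (i : Fin (2*t+1)) (j : Fin 3) (i' : Fin (2*t+1)) :
    (Htri t).Inc (some (i, j)) (Sum.inr i') ↔ i' = i ∧ j = 0 := by
  simp only [Multigraph.Inc, Htri, Sym2.mem_iff, Option.some.injEq, Prod.mk.injEq]
  constructor
  · rintro (h | ⟨h1, h2⟩)
    · exact absurd h (by simp)
    · exact ⟨h1.symm, h2⟩
  · rintro ⟨rfl, rfl⟩
    exact Or.inr ⟨rfl, rfl⟩

lemma boundary_none {R : Type} [CommRing R] (τ : _ → _ → ℤˣ) (f : (Fin (2*t+1) × Fin 3) ⊕ Fin (2*t+1) → R) :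
    (Htri t).boundary τ f none = ∑ i, ((τ (Sum.inr i) none : ℤ) : R) * f (Sum.inr i) := by
  rw [Multigraph.boundary, Multigraph.incEdges, Finset.sum_filter, Fintype.sum_sum_type]
  rw [Finset.sum_eq_zero (fun p _ => by rw [if_neg (inc_none_inl p)]), zero_add]
  exact Finset.sum_congr rfl fun i _ => if_pos (inc_none_inr i)

lemma boundary_some {R : Type} [CommRing R] (τ : _ → _ → ℤˣ) (f : (Fin (2*t+1) × Fin 3) ⊕ Fin (2*t+1) → R)
    (i : Fin (2*t+1)) (j : Fin 3) :
    (Htri t).boundary τ f (some (i, j)) =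
      ((τ (Sum.inl (i, j)) (some (i,j)) : ℤ) : R) * f (Sum.inl (i, j)) +
      ((τ (Sum.inl (i, j+2)) (some (i,j)) : ℤ) : R) * f (Sum.inl (i, j+2)) +
      (if j = 0 then ((τ (Sum.inr i) (some (i,j)) : ℤ) : R) * f (Sum.inr i) else 0) := by
  rw [Multigraph.boundary, Multigraph.incEdges, Finset.sum_filter, Fintype.sum_sum_type]
  congr 1
  · rw [Fintype.sum_prod_type_right]
    have h1 : ∀ j' : Fin 3, ∑ i' : Fin (2*t+1),
        (if (Htri t).Inc (some (i,j)) (Sum.inl (i', j')) then ((τ (Sum.inl (i', j')) (some (i,j)) : ℤ) : R) * f (Sum.inl (i', j')) else 0)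
        = (if j' = j ∨ j' = j + 2 then ((τ (Sum.inl (i, j')) (some (i,j)) : ℤ) : R) * f (Sum.inl (i, j')) else 0) := by
      intro j'
      simp only [inc_some_inl, ite_and]
      rw [Finset.sum_ite_eq' Finset.univ i]
      simp
    rw [Finset.sum_congr rfl fun j' _ => h1 j']
    exact fin3_sum j _
  · simp only [inc_some_inr, ite_and]
    rw [Finset.sum_ite_eq' Finset.univ i]
    by_cases hj : j = 0 <;> simp [hj]

end HtriProof
namespace HtriProof
open Multigraph
variable {t : ℕ}

lemma triangle_key {R : Type} [CommRing R] [LinearOrder R] [IsStrictOrderedRing R]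
    (σ : (Fin (2*t+1) × Fin 3) ⊕ Fin (2*t+1) → ℤˣ) (τ : _ → _ → ℤˣ)
    (hτ : (Htri t).IsOrientation σ τ) (f : (Fin (2*t+1) × Fin 3) ⊕ Fin (2*t+1) → R)
    (hb : ∀ v, (Htri t).boundary τ f v = 0)
    (hf : ∀ e, 1 ≤ |f e|) (i : Fin (2*t+1)) :
    σ (Sum.inl (i,0)) * σ (Sum.inl (i,1)) * σ (Sum.inl (i,2)) = -1 ∧
    |f (Sum.inr i)| = 2 * |f (Sum.inl (i,0))| := by
  have e02 : (0:Fin 3)+2 = 2 := by decide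
  have e12 : (1:Fin 3)+2 = 0 := by decide
  have e22 : (2:Fin 3)+2 = 1 := by decide
  have hb0 := hb (some (i,0)); rw [boundary_some, e02, if_pos rfl] at hb0
  have hb1 := hb (some (i,1)); rw [boundary_some, e12, if_neg (by decide : ¬(1:Fin 3)=0), add_zero] at hb1
  have hb2 := hb (some (i,2)); rw [boundary_some, e22, if_neg (by decide : ¬(2:Fin 3)=0), add_zero] at hb2
  have o0 : τ (Sum.inl (i,0)) (some (i,0)) * τ (Sum.inl (i,0)) (some (i,1)) = -σ (Sum.inl (i,0)) :=
    hτ _ _ _ rfl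
  have o1 : τ (Sum.inl (i,1)) (some (i,1)) * τ (Sum.inl (i,1)) (some (i,2)) = -σ (Sum.inl (i,1)) :=
    hτ _ _ _ rfl
  have o2 : τ (Sum.inl (i,2)) (some (i,2)) * τ (Sum.inl (i,2)) (some (i,0)) = -σ (Sum.inl (i,2)) :=
    hτ _ _ _ rfl
  have co0 : ((τ (Sum.inl (i,0)) (some (i,0)) : ℤ) : R) * ((τ (Sum.inl (i,0)) (some (i,1)) : ℤ) : R)
      = -((σ (Sum.inl (i,0)) : ℤ) : R) := by exact_mod_cast congrArg (fun z : ℤˣ => ((z:ℤ):R)) o0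
  have co1 : ((τ (Sum.inl (i,1)) (some (i,1)) : ℤ) : R) * ((τ (Sum.inl (i,1)) (some (i,2)) : ℤ) : R)
      = -((σ (Sum.inl (i,1)) : ℤ) : R) := by exact_mod_cast congrArg (fun z : ℤˣ => ((z:ℤ):R)) o1
  have co2 : ((τ (Sum.inl (i,2)) (some (i,2)) : ℤ) : R) * ((τ (Sum.inl (i,2)) (some (i,0)) : ℤ) : R)
      = -((σ (Sum.inl (i,2)) : ℤ) : R) := by exact_mod_cast congrArg (fun z : ℤˣ => ((z:ℤ):R)) o2
  have hsq_q := usq (R := R) (τ (Sum.inl (i,0)) (some (i,1)))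
  have hsq_rr := usq (R := R) (τ (Sum.inl (i,1)) (some (i,1)))
  have hsq_u := usq (R := R) (τ (Sum.inl (i,2)) (some (i,2)))
  have hsq_x := usq (R := R) (τ (Sum.inr i) (some (i,0)))
  have habs_q := uabs (R := R) (τ (Sum.inl (i,0)) (some (i,1)))
  have habs_x := uabs (R := R) (τ (Sum.inr i) (some (i,0)))
  have habs_s0 := uabs (R := R) (σ (Sum.inl (i,0)))
  set p : R := ((τ (Sum.inl (i,0)) (some (i,0)) : ℤ) : R) with hp_def
  set q : R := ((τ (Sum.inl (i,0)) (some (i,1)) : ℤ) : R) with hq_def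
  set rr : R := ((τ (Sum.inl (i,1)) (some (i,1)) : ℤ) : R) with hrr_def
  set ss : R := ((τ (Sum.inl (i,1)) (some (i,2)) : ℤ) : R) with hss_def
  set u : R := ((τ (Sum.inl (i,2)) (some (i,2)) : ℤ) : R) with hu_def
  set w : R := ((τ (Sum.inl (i,2)) (some (i,0)) : ℤ) : R) with hw_def
  set x : R := ((τ (Sum.inr i) (some (i,0)) : ℤ) : R) with hx_def
  set s0 : R := ((σ (Sum.inl (i,0)) : ℤ) : R) with hs0_def
  set s1 : R := ((σ (Sum.inl (i,1)) : ℤ) : R) with hs1_def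
  set s2 : R := ((σ (Sum.inl (i,2)) : ℤ) : R) with hs2_def
  set f0 : R := f (Sum.inl (i,0)) with hf0_def
  set f1 : R := f (Sum.inl (i,1)) with hf1_def
  set f2 : R := f (Sum.inl (i,2)) with hf2_def
  set fbr : R := f (Sum.inr i) with hfbr_def
  -- hb1 : rr * f1 + q * f0 = 0 ; hb2 : u * f2 + ss * f1 = 0 ; hb0 : p*f0 + w*f2 + x*fbr = 0
  have h4 : f1 = -(rr*q)*f0 := by linear_combination rr*hb1 - f1*hsq_rr
  have h5 : f2 = (u*ss*rr*q)*f0 := by linear_combination u*hb2 - f2*hsq_u - (u*ss)*h4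
  have h6 : fbr = -(x*p + x*w*u*ss*rr*q)*f0 := by linear_combination x*hb0 - fbr*hsq_x - (x*w)*h5
  have h7 : (x*p + x*w*u*ss*rr*q) = x*q*(s1*s2 - s0) := by
    linear_combination (x*q)*co0 - (x*p)*hsq_q + (x*w*u*q)*co1 - (x*q*s1)*co2
  have h8 : fbr = (x*q*(s0 - s1*s2))*f0 := by rw [h6, h7]; ring
  rcases Int.units_eq_one_or (σ (Sum.inl (i,0)) * σ (Sum.inl (i,1)) * σ (Sum.inl (i,2))) with hbal | hbal
  · exfalso
    have h9u : σ (Sum.inl (i,1)) * σ (Sum.inl (i,2)) = σ (Sum.inl (i,0)) := units3 _ _ _ hbal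
    have h9 : s1*s2 = s0 := by
      rw [hs1_def, hs2_def, hs0_def]
      exact_mod_cast congrArg (fun z : ℤˣ => ((z:ℤ):R)) h9u
    have h10 : fbr = 0 := by rw [h8, h9]; ring
    have h11 := hf (Sum.inr i)
    rw [← hfbr_def, h10] at h11
    norm_num at h11
  · refine ⟨hbal, ?_⟩
    have h9u : σ (Sum.inl (i,1)) * σ (Sum.inl (i,2)) = -σ (Sum.inl (i,0)) := units3' _ _ _ hbal
    have h9 : s1*s2 = -s0 := by
      rw [hs1_def, hs2_def, hs0_def]
      exact_mod_cast congrArg (fun z : ℤˣ => ((z:ℤ):R)) h9u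
    have h12 : fbr = (x*q*s0*2)*f0 := by rw [h8, h9]; ring
    rw [h12, abs_mul, abs_mul, abs_mul, abs_mul, habs_x, habs_q, habs_s0]
    norm_num

end HtriProof
namespace HtriProof
open Multigraph
variable {t : ℕ}

def xunit (σ : (Fin (2*t+1) × Fin 3) ⊕ Fin (2*t+1) → ℤˣ) (s : Fin (2*t+1) → ℤˣ)
    (i : Fin (2*t+1)) : ℤˣ :=
  -(σ (Sum.inr i)) * σ (Sum.inl (i,0)) * s i

def Aunit (σ : (Fin (2*t+1) × Fin 3) ⊕ Fin (2*t+1) → ℤˣ) (s : Fin (2*t+1) → ℤˣ)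
    (i : Fin (2*t+1)) (j : Fin 3) : ℤˣ :=
  if j = 0 then -(σ (Sum.inl (i,0))) * xunit σ s i
  else if j = 1 then -(xunit σ s i)
  else -(σ (Sum.inl (i,1))) * xunit σ s i

def Bunit (σ : (Fin (2*t+1) × Fin 3) ⊕ Fin (2*t+1) → ℤˣ) (s : Fin (2*t+1) → ℤˣ)
    (i : Fin (2*t+1)) (j : Fin 3) : ℤˣ :=
  if j = 0 then xunit σ s i
  else if j = 1 then σ (Sum.inl (i,1)) * xunit σ s i
  else σ (Sum.inl (i,1)) * σ (Sum.inl (i,2)) * xunit σ s i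

def tau (σ : (Fin (2*t+1) × Fin 3) ⊕ Fin (2*t+1) → ℤˣ) (s : Fin (2*t+1) → ℤˣ) :
    ((Fin (2*t+1) × Fin 3) ⊕ Fin (2*t+1)) → Option (Fin (2*t+1) × Fin 3) → ℤˣ :=
  fun e v => match e, v with
  | Sum.inl (i,j), some (i',j') =>
      if i' = i ∧ j' = j then Aunit σ s i j
      else if i' = i ∧ j' = j+1 then Bunit σ s i j else 1
  | Sum.inl _, none => 1
  | Sum.inr i, some (i',j') => if i' = i ∧ j' = 0 then σ (Sum.inl (i,0)) * xunit σ s i else 1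
  | Sum.inr i, none => s i

variable (σ : (Fin (2*t+1) × Fin 3) ⊕ Fin (2*t+1) → ℤˣ) (s : Fin (2*t+1) → ℤˣ)

lemma tau_inl_self (i : Fin (2*t+1)) (j : Fin 3) :
    tau σ s (Sum.inl (i,j)) (some (i,j)) = Aunit σ s i j := by
  show (if i = i ∧ j = j then _ else _) = _
  rw [if_pos ⟨rfl, rfl⟩]

lemma tau_inl_snd (i : Fin (2*t+1)) (j : Fin 3) :
    tau σ s (Sum.inl (i,j)) (some (i,j+1)) = Bunit σ s i j := by
  show (if i = i ∧ j + 1 = j then _ else if i = i ∧ j + 1 = j + 1 then _ else _) = _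
  rw [if_neg (fun h => (by decide : ∀ j : Fin 3, ¬ j + 1 = j) j h.2), if_pos ⟨rfl, rfl⟩]

lemma tau_inl_plus2 (i : Fin (2*t+1)) (j : Fin 3) :
    tau σ s (Sum.inl (i,j+2)) (some (i,j)) = Bunit σ s i (j+2) := by
  show (if i = i ∧ j = j+2 then _ else if i = i ∧ j = j+2+1 then _ else _) = _
  rw [if_neg (fun h => (by decide : ∀ j : Fin 3, ¬ j = j + 2) j h.2),
    if_pos ⟨rfl, (by decide : ∀ j : Fin 3, j = j + 2 + 1) j⟩]

lemma tau_inr_some (i : Fin (2*t+1)) :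
    tau σ s (Sum.inr i) (some (i,0)) = σ (Sum.inl (i,0)) * xunit σ s i := by
  show (if i = i ∧ (0:Fin 3) = 0 then _ else _) = _
  rw [if_pos ⟨rfl, rfl⟩]

lemma tau_inr_none (i : Fin (2*t+1)) : tau σ s (Sum.inr i) none = s i := rfl

lemma tau_orient : (Htri t).IsOrientation σ (tau σ s) := by
  intro e u v huv
  match e with
  | Sum.inl (i,j) =>
    have huv' : s(some (i,j), some (i,j+1)) = s(u, v) := huv
    rw [Sym2.eq_iff] at huv'
    have hAB : Aunit σ s i j * Bunit σ s i j = -σ (Sum.inl (i,j)) := by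
      rcases Int.units_eq_one_or (σ (Sum.inr i)) with h1|h1 <;>
      rcases Int.units_eq_one_or (σ (Sum.inl (i,0))) with h2|h2 <;>
      rcases Int.units_eq_one_or (σ (Sum.inl (i,1))) with h3|h3 <;>
      rcases Int.units_eq_one_or (σ (Sum.inl (i,2))) with h4|h4 <;>
      rcases Int.units_eq_one_or (s i) with h5|h5 <;>
      fin_cases j <;>
      simp [Aunit, Bunit, xunit, h1, h2, h3, h4, h5]
    rcases huv' with ⟨rfl, rfl⟩ | ⟨rfl, rfl⟩
    · rw [tau_inl_self, tau_inl_snd]; exact hAB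
    · rw [tau_inl_self, tau_inl_snd, mul_comm]; exact hAB
  | Sum.inr i =>
    have huv' : s((none : Option (Fin (2*t+1) × Fin 3)), some (i,0)) = s(u, v) := huv
    rw [Sym2.eq_iff] at huv'
    have hAB : s i * (σ (Sum.inl (i,0)) * xunit σ s i) = -σ (Sum.inr i) := by
      rcases Int.units_eq_one_or (σ (Sum.inr i)) with h1|h1 <;>
      rcases Int.units_eq_one_or (σ (Sum.inl (i,0))) with h2|h2 <;>
      rcases Int.units_eq_one_or (s i) with h5|h5 <;>
      simp [xunit, h1, h2, h5]
    rcases huv' with ⟨rfl, rfl⟩ | ⟨rfl, rfl⟩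
    · rw [tau_inr_none, tau_inr_some]; exact hAB
    · rw [tau_inr_none, tau_inr_some, mul_comm]; exact hAB

lemma coeff_zero (i : Fin (2*t+1))
    (hunb : σ (Sum.inl (i,0)) * σ (Sum.inl (i,1)) * σ (Sum.inl (i,2)) = -1) (j : Fin 3) :
    ((Aunit σ s i j : ℤ)) + ((Bunit σ s i (j+2) : ℤ))
      + (if j = 0 then 2*((σ (Sum.inl (i,0)) * xunit σ s i : ℤˣ) : ℤ) else 0) = 0 := by
  rcases Int.units_eq_one_or (σ (Sum.inr i)) with h1|h1 <;>
  rcases Int.units_eq_one_or (σ (Sum.inl (i,0))) with h2|h2 <;>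
  rcases Int.units_eq_one_or (σ (Sum.inl (i,1))) with h3|h3 <;>
  rcases Int.units_eq_one_or (σ (Sum.inl (i,2))) with h4|h4 <;>
  rcases Int.units_eq_one_or (s i) with h5|h5 <;>
  first
  | exact absurd hunb (by rw [h2, h3, h4]; decide)
  | (fin_cases j <;> simp [Aunit, Bunit, xunit, h1, h2, h3, h4, h5])

lemma construct {R : Type} [CommRing R] [LinearOrder R] [IsStrictOrderedRing R]
    (hunb : ∀ i, σ (Sum.inl (i,0)) * σ (Sum.inl (i,1)) * σ (Sum.inl (i,2)) = -1)
    (g : Fin (2*t+1) → R)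
    (hsum : ∑ i, ((s i : ℤ) : R) * (2 * g i) = 0) :
    (Htri t).IsOrientation σ (tau σ s) ∧
    ∀ v, (Htri t).boundary (tau σ s)
      (fun e => Sum.elim (fun p => g p.1) (fun i => 2 * g i) e) v = 0 := by
  refine ⟨tau_orient σ s, ?_⟩
  intro v
  match v with
  | none =>
    rw [boundary_none]
    simpa [tau_inr_none] using hsum
  | some (i, j) =>
    rw [boundary_some, tau_inl_self, tau_inl_plus2]
    have key := coeff_zero σ s i (hunb i) j
    by_cases hj : j = 0
    · subst hj
      rw [if_pos rfl] at key
      rw [if_pos rfl, tau_inr_some]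
      have keyR : ((Aunit σ s i 0 : ℤ) : R) + ((Bunit σ s i (0+2) : ℤ) : R)
          + 2*(((σ (Sum.inl (i,0)) * xunit σ s i : ℤˣ) : ℤ) : R) = 0 := by
        exact_mod_cast congrArg (fun z : ℤ => (z : R)) key
      show ((Aunit σ s i 0 : ℤ) : R) * g i + ((Bunit σ s i (0+2) : ℤ) : R) * g i
          + (((σ (Sum.inl (i,0)) * xunit σ s i : ℤˣ) : ℤ) : R) * (2 * g i) = 0
      linear_combination (g i) * keyR
    · rw [if_neg hj] at key ⊢
      rw [add_zero] at key
      have keyR : ((Aunit σ s i j : ℤ) : R) + ((Bunit σ s i (j+2) : ℤ) : R) = 0 := by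
        exact_mod_cast congrArg (fun z : ℤ => (z : R)) key
      show ((Aunit σ s i j : ℤ) : R) * g i + ((Bunit σ s i (j+2) : ℤ) : R) * g i + 0 = 0
      linear_combination (g i) * keyR

end HtriProof
namespace HtriProof
open Multigraph
variable {t : ℕ}

lemma filter_le_range (t : ℕ) : (Finset.range (2*t+1)).filter (fun k => k ≤ t) = Finset.range (t+1) := by
  ext k; simp; omega

lemma filter_not_le_range (t : ℕ) : (Finset.range (2*t+1)).filter (fun k => ¬ k ≤ t) = Finset.Ico (t+1) (2*t+1) := by
  ext k; simp; omega

lemma real_flow (ht : 1 ≤ t) (σ : (Fin (2*t+1) × Fin 3) ⊕ Fin (2*t+1) → ℤˣ)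
    (hunb : ∀ i, σ (Sum.inl (i,0)) * σ (Sum.inl (i,1)) * σ (Sum.inl (i,2)) = -1) :
    ∃ f : ((Fin (2*t+1) × Fin 3) ⊕ Fin (2*t+1)) → ℝ,
      (Htri t).IsNZFlow σ (3 + 2/(t:ℝ)) f ∧
      ∀ e, f e ∈ ({1, 1 + 1/(t:ℝ), 2, 2 + 2/(t:ℝ)} : Set ℝ) := by
  have h0t : (0:ℝ) < t := by exact_mod_cast Nat.pos_of_ne_zero (by omega)
  have h1t : (0:ℝ) < 1/t := by positivity
  have h12 : (2:ℝ)/t = 2*(1/t) := by ring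
  set s : Fin (2*t+1) → ℤˣ := fun i => if (i:ℕ) ≤ t then 1 else -1 with hs_def
  set g : Fin (2*t+1) → ℝ := fun i => if (i:ℕ) ≤ t then 1 else 1 + 1/t with hg_def
  set F : ℕ → ℝ := fun k => if k ≤ t then (2:ℝ) else -(2+2/t) with hF_def
  have hsum : ∑ i, ((s i : ℤ) : ℝ) * (2 * g i) = 0 := by
    have hcongr : ∀ i : Fin (2*t+1), ((s i : ℤ) : ℝ) * (2 * g i) = F (i : ℕ) := by
      intro i
      simp only [hs_def, hg_def, hF_def]
      split_ifs with h
      · norm_num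
      · push_cast; ring
    calc ∑ i, ((s i : ℤ) : ℝ) * (2 * g i) = ∑ i : Fin (2*t+1), F (i:ℕ) :=
          Finset.sum_congr rfl (fun i _ => hcongr i)
      _ = ∑ k ∈ Finset.range (2*t+1), F k := Fin.sum_univ_eq_sum_range F _
      _ = 0 := by
          rw [hF_def]
          rw [Finset.sum_ite, Finset.sum_const, Finset.sum_const, filter_le_range,
            filter_not_le_range, Finset.card_range, Nat.card_Ico]
          have hc : 2*t+1 - (t+1) = t := by omega
          rw [hc, nsmul_eq_mul, nsmul_eq_mul]
          push_cast
          field_simp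
          ring
  obtain ⟨horient, hbound⟩ := construct σ s hunb g hsum
  refine ⟨_, ⟨tau σ s, horient, hbound, ?_⟩, ?_⟩
  · rintro (⟨i, j⟩ | i) <;> simp only [Sum.elim_inl, Sum.elim_inr, hg_def] <;> split_ifs
    · rw [abs_one]; constructor <;> linarith
    · rw [abs_of_pos (by positivity)]; constructor <;> linarith
    · rw [abs_of_pos (by positivity)]; constructor <;> linarith
    · rw [abs_of_pos (by positivity)]; constructor <;> linarith
  · rintro (⟨i, j⟩ | i) <;> simp only [Sum.elim_inl, Sum.elim_inr, hg_def] <;> split_ifs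
    · simp
    · simp
    · norm_num [Set.mem_insert_iff]
    · have h2 : 2*(1+1/(t:ℝ)) = 2+2/t := by ring
      rw [h2]; simp
end HtriProof
namespace HtriProof
open Multigraph
variable {t : ℕ}

lemma filter_le_range2 (t : ℕ) (ht : 1 ≤ t) :
    (Finset.range (2*t)).filter (fun k => k ≤ t) = Finset.range (t+1) := by
  ext k; simp; omega

lemma filter_not_le_range2 (t : ℕ) :
    (Finset.range (2*t)).filter (fun k => ¬ k ≤ t) = Finset.Ico (t+1) (2*t) := by
  ext k; simp; omega

lemma int_flow (ht : 1 ≤ t) (σ : (Fin (2*t+1) × Fin 3) ⊕ Fin (2*t+1) → ℤˣ)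
    (hunb : ∀ i, σ (Sum.inl (i,0)) * σ (Sum.inl (i,1)) * σ (Sum.inl (i,2)) = -1) :
    ∃ f : ((Fin (2*t+1) × Fin 3) ⊕ Fin (2*t+1)) → ℤ,
      (Htri t).IsIntNZFlow σ 5 f ∧ ∀ e, f e ∈ ({1, 2, 4} : Set ℤ) := by
  set s : Fin (2*t+1) → ℤˣ := fun i => if (i:ℕ) ≤ t then 1 else -1 with hs_def
  set g : Fin (2*t+1) → ℤ := fun i => if (i:ℕ) ≤ t then 1 else if (i:ℕ) < 2*t then 1 else 2 with hg_def
  set F : ℕ → ℤ := fun k => if k ≤ t then (2:ℤ) else if k < 2*t then -2 else -4 with hF_def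
  have hsum : ∑ i, ((s i : ℤ) : ℤ) * (2 * g i) = 0 := by
    have hcongr : ∀ i : Fin (2*t+1), ((s i : ℤ) : ℤ) * (2 * g i) = F (i : ℕ) := by
      intro i
      simp only [hs_def, hg_def, hF_def]
      split_ifs with h h2 <;> simp <;> omega
    calc ∑ i, ((s i : ℤ) : ℤ) * (2 * g i) = ∑ i : Fin (2*t+1), F (i:ℕ) :=
          Finset.sum_congr rfl (fun i _ => hcongr i)
      _ = ∑ k ∈ Finset.range (2*t+1), F k := Fin.sum_univ_eq_sum_range F _
      _ = 0 := by
          rw [Finset.sum_range_succ]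
          have hlast : F (2*t) = -4 := by
            simp only [hF_def]
            rw [if_neg (by omega), if_neg (by omega)]
          have hmain : ∀ k ∈ Finset.range (2*t), F k = if k ≤ t then (2:ℤ) else -2 := by
            intro k hk
            simp only [Finset.mem_range] at hk
            simp only [hF_def]
            split_ifs <;> omega
          rw [Finset.sum_congr rfl hmain, hlast]
          rw [Finset.sum_ite, Finset.sum_const, Finset.sum_const, filter_le_range2 t ht,
            filter_not_le_range2, Finset.card_range, Nat.card_Ico,
            nsmul_eq_mul, nsmul_eq_mul]
          have h1 : ((2*t - (t+1) : ℕ) : ℤ) = (t:ℤ) - 1 := by omega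
          rw [h1]
          push_cast
          ring
  obtain ⟨horient, hbound⟩ := construct σ s hunb g hsum
  refine ⟨_, ⟨tau σ s, horient, hbound, ?_⟩, ?_⟩
  · rintro (⟨i, j⟩ | i) <;> simp only [Sum.elim_inl, Sum.elim_inr, hg_def] <;> split_ifs <;>
      norm_num
  · rintro (⟨i, j⟩ | i) <;> simp only [Sum.elim_inl, Sum.elim_inr, hg_def] <;> split_ifs <;>
      norm_num [Set.mem_insert_iff]
end HtriProof
namespace HtriProof
open Multigraph
variable {t : ℕ}

lemma sum_bound (t : ℕ) (B : ℝ) (d : Fin (2*t+1) → ℝ) (h0 : ∑ i, d i = 0)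
    (h2 : ∀ i, 2 ≤ |d i|) (hB : ∀ i, |d i| ≤ B) : 2*((t:ℝ)+1) ≤ t*B := by
  classical
  have hd0 : ∀ i, d i ≠ 0 := by
    intro i h
    have := h2 i; rw [h, abs_zero] at this; linarith
  set S := Finset.univ.filter (fun i : Fin (2*t+1) => 0 < d i) with hS
  set T := Finset.univ.filter (fun i : Fin (2*t+1) => ¬ 0 < d i) with hT
  have hcard : S.card + T.card = 2*t+1 := by
    rw [hS, hT, Finset.card_filter_add_card_filter_not, Finset.card_univ,
      Fintype.card_fin]
  have hsplit : ∑ i ∈ S, d i + ∑ i ∈ T, d i = 0 := by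
    rw [hS, hT, Finset.sum_filter_add_sum_filter_not]; exact h0
  have hBpos : (2:ℝ) ≤ B := le_trans (h2 ⟨0, by omega⟩) (hB _)
  have hSlow : (S.card : ℝ) * 2 ≤ ∑ i ∈ S, d i := by
    rw [← nsmul_eq_mul]
    refine Finset.card_nsmul_le_sum S d 2 (fun i hi => ?_)
    have hpos : 0 < d i := by simpa [hS] using hi
    have := h2 i; rw [abs_of_pos hpos] at this; exact this
  have hSup : ∑ i ∈ S, d i ≤ (S.card : ℝ) * B := by
    rw [← nsmul_eq_mul]
    exact Finset.sum_le_card_nsmul S d B (fun i _ => le_trans (le_abs_self _) (hB i))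
  have hTlow : (T.card : ℝ) * 2 ≤ -∑ i ∈ T, d i := by
    rw [← Finset.sum_neg_distrib, ← nsmul_eq_mul]
    refine Finset.card_nsmul_le_sum T (fun i => -d i) 2 (fun i hi => ?_)
    have hneg : ¬ 0 < d i := by simpa [hT] using hi
    have hlt : d i < 0 := lt_of_le_of_ne (not_lt.mp hneg) (hd0 i)
    have := h2 i; rw [abs_of_neg hlt] at this; exact this
  have hTup : -∑ i ∈ T, d i ≤ (T.card : ℝ) * B := by
    rw [← Finset.sum_neg_distrib, ← nsmul_eq_mul]
    refine Finset.sum_le_card_nsmul T (fun i => -d i) B (fun i _ => ?_)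
    exact le_trans (neg_le_abs _) (hB i)
  rcases le_or_gt S.card t with hc | hc
  · have hTc : ((t:ℝ)+1) ≤ (T.card:ℝ) := by
      have : t+1 ≤ T.card := by omega
      exact_mod_cast this
    have hSc : (S.card:ℝ) ≤ (t:ℝ) := by exact_mod_cast hc
    have hmul := mul_le_mul_of_nonneg_right hSc (by linarith : (0:ℝ) ≤ B)
    linarith
  · have hSc : ((t:ℝ)+1) ≤ (S.card:ℝ) := by
      have : t+1 ≤ S.card := by omega
      exact_mod_cast this
    have hTc : (T.card:ℝ) ≤ (t:ℝ) := by
      have : T.card ≤ t := by omega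
      exact_mod_cast this
    have hmul := mul_le_mul_of_nonneg_right hTc (by linarith : (0:ℝ) ≤ B)
    linarith

lemma fc_lower (ht : 1 ≤ t) (σ : (Fin (2*t+1) × Fin 3) ⊕ Fin (2*t+1) → ℤˣ) (r : ℝ)
    (hr : (Htri t).HasNZFlow σ r) : 3 + 2/(t:ℝ) ≤ r := by
  obtain ⟨f, τ, hτ, hb, hbd⟩ := hr
  set d : Fin (2*t+1) → ℝ := fun i => ((τ (Sum.inr i) none : ℤ):ℝ) * f (Sum.inr i) with hd
  have h0 : ∑ i, d i = 0 := by
    simp only [hd]; rw [← boundary_none]; exact hb none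
  have habs : ∀ i, |d i| = |f (Sum.inr i)| := by
    intro i; simp only [hd]; rw [abs_mul, uabs, one_mul]
  have htri := fun i => triangle_key σ τ hτ f hb (fun e => (hbd e).1) i
  have h2 : ∀ i, 2 ≤ |d i| := by
    intro i; rw [habs i, (htri i).2]
    have := (hbd (Sum.inl (i,0))).1; linarith
  have hB : ∀ i, |d i| ≤ r - 1 := by
    intro i; rw [habs i]; exact (hbd (Sum.inr i)).2
  have key := sum_bound t (r-1) d h0 h2 hB
  have h0t : (0:ℝ) < t := by exact_mod_cast Nat.pos_of_ne_zero (by omega)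
  have h2' : 2/(t:ℝ) ≤ r - 3 := by
    rw [div_le_iff₀ h0t]; nlinarith
  linarith

lemma fc_eq (ht : 1 ≤ t) (σ : (Fin (2*t+1) × Fin 3) ⊕ Fin (2*t+1) → ℤˣ)
    (hadm : (Htri t).FlowAdmissible σ) : (Htri t).Fc σ = 3 + 2/(t:ℝ) := by
  obtain ⟨r0, _, f0, τ0, hτ0, hb0, hbd0⟩ := hadm
  have hunb := fun i => (triangle_key σ τ0 hτ0 f0 hb0 (fun e => (hbd0 e).1) i).1
  obtain ⟨f, hflow, _⟩ := real_flow ht σ hunb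
  have h0t : (0:ℝ) < t := by exact_mod_cast Nat.pos_of_ne_zero (by omega)
  have h2t : (0:ℝ) < 2/t := by positivity
  apply IsLeast.csInf_eq
  constructor
  · exact ⟨by linarith, f, hflow⟩
  · intro r hr
    exact fc_lower ht σ r hr.2

lemma fi_eq (ht : 1 ≤ t) (σ : (Fin (2*t+1) × Fin 3) ⊕ Fin (2*t+1) → ℤˣ)
    (hadm : (Htri t).FlowAdmissible σ) : (Htri t).Fi σ = 5 := by
  obtain ⟨r0, _, f0, τ0, hτ0, hb0, hbd0⟩ := hadm
  have hunb := fun i => (triangle_key σ τ0 hτ0 f0 hb0 (fun e => (hbd0 e).1) i).1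
  obtain ⟨f, hflow, _⟩ := int_flow ht σ hunb
  have h5 : (5:ℕ) ∈ {n : ℕ | (Htri t).HasIntNZFlow σ n} := ⟨f, hflow⟩
  have hlow : ∀ n ∈ {n : ℕ | (Htri t).HasIntNZFlow σ n}, 5 ≤ n := by
    intro n hn
    by_contra hcon
    push_neg at hcon
    obtain ⟨f', τ', hτ', hb', hbd'⟩ := hn
    have htri := fun i => triangle_key σ τ' hτ' f' hb' (fun e => (hbd' e).1) i
    have hn4 : ((n:ℤ)) ≤ 4 := by exact_mod_cast (by omega : n ≤ 4)
    have habs2 : ∀ i, |f' (Sum.inr i)| = 2 := by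
      intro i
      have h1 := (htri i).2
      have h2 := (hbd' (Sum.inl (i,0))).1
      have h3 := (hbd' (Sum.inr i)).2
      omega
    set d : Fin (2*t+1) → ℤ := fun i => ((τ' (Sum.inr i) none : ℤ)) * f' (Sum.inr i) with hd
    have h0 : ∑ i, d i = 0 := by
      have hh := hb' none
      rw [boundary_none] at hh
      push_cast at hh
      simpa only [hd] using hh
    have hval : ∀ i, ((d i : ℤ) : ZMod 4) = 2 := by
      intro i
      have : |d i| = 2 := by
        have huu : |((τ' (Sum.inr i) none : ℤˣ) : ℤ)| = 1 := by
          rcases Int.units_eq_one_or (τ' (Sum.inr i) none) with h|h <;> simp [h]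
        simp only [hd]; rw [abs_mul, huu, one_mul]; exact habs2 i
      rcases (abs_eq (by norm_num : (0:ℤ) ≤ 2)).mp this with h | h <;> rw [h] <;> decide
    have hcast : ((∑ i, d i : ℤ) : ZMod 4) = 0 := by rw [h0]; simp
    rw [Int.cast_sum, Finset.sum_congr rfl (fun i _ => hval i), Finset.sum_const,
      Finset.card_univ, Fintype.card_fin] at hcast
    have : ((2*t+1 : ℕ) : ZMod 4) * 2 = 0 := by rw [← nsmul_eq_mul]; exact hcast
    have h4 : ((4:ZMod 4)) = 0 := by decide
    push_cast at this
    have h2 : (2:ZMod 4) = 0 := by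
      have : (4:ZMod 4) * (t:ZMod 4) + 2 = 0 := by linear_combination this
      rw [h4, zero_mul, zero_add] at this
      exact this
    exact absurd h2 (by decide)
  have hne : {n : ℕ | (Htri t).HasIntNZFlow σ n}.Nonempty := ⟨5, h5⟩
  exact le_antisymm (Nat.sInf_le h5) (hlow _ (Nat.sInf_mem hne))

def sig0 (t : ℕ) : ((Fin (2*t+1) × Fin 3) ⊕ Fin (2*t+1)) → ℤˣ := fun e =>
  match e with
  | Sum.inl (_, j) => if j = 0 then -1 else 1
  | Sum.inr _ => 1

lemma sig0_unb (i : Fin (2*t+1)) :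
    sig0 t (Sum.inl (i,0)) * sig0 t (Sum.inl (i,1)) * sig0 t (Sum.inl (i,2)) = -1 := by
  simp [sig0]

lemma adm0 (ht : 1 ≤ t) : (Htri t).FlowAdmissible (sig0 t) := by
  obtain ⟨f, hflow, _⟩ := real_flow ht (sig0 t) (fun i => sig0_unb i)
  have h0t : (0:ℝ) < t := by exact_mod_cast Nat.pos_of_ne_zero (by omega)
  have h2t : (0:ℝ) < 2/t := by positivity
  exact ⟨3 + 2/(t:ℝ), by linarith, f, hflow⟩

end HtriProof

theorem stmt0 (t : ℕ) (ht : 1 ≤ t) :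
    (Htri t).Spectrum = {3 + 2 / (t : ℝ)} ∧
    (Htri t).IntSpectrum = {5} ∧
    ∀ σ, (Htri t).FlowAdmissible σ →
      (∃ f : ((Fin (2 * t + 1) × Fin 3) ⊕ Fin (2 * t + 1)) → ℤ,
        (Htri t).IsIntNZFlow σ 5 f ∧ ∀ e, f e ∈ ({1, 2, 4} : Set ℤ)) ∧
      (∃ f : ((Fin (2 * t + 1) × Fin 3) ⊕ Fin (2 * t + 1)) → ℝ,
        (Htri t).IsNZFlow σ (3 + 2 / (t : ℝ)) f ∧
        ∀ e, f e ∈ ({1, 1 + 1 / (t : ℝ), 2, 2 + 2 / (t : ℝ)} : Set ℝ)) := by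
  refine ⟨?_, ?_, ?_⟩
  · ext r
    simp only [Multigraph.Spectrum, Set.mem_setOf_eq, Set.mem_singleton_iff]
    constructor
    · rintro ⟨σ, hadm, hfc⟩
      rw [← hfc]
      exact HtriProof.fc_eq ht σ hadm
    · rintro rfl
      exact ⟨HtriProof.sig0 t, HtriProof.adm0 ht,
        HtriProof.fc_eq ht _ (HtriProof.adm0 ht)⟩
  · ext n
    simp only [Multigraph.IntSpectrum, Set.mem_setOf_eq, Set.mem_singleton_iff]
    constructor
    · rintro ⟨σ, hadm, hfi⟩
      rw [← hfi]
      exact HtriProof.fi_eq ht σ hadm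
    · rintro rfl
      exact ⟨HtriProof.sig0 t, HtriProof.adm0 ht,
        HtriProof.fi_eq ht _ (HtriProof.adm0 ht)⟩
  · intro σ hadm
    obtain ⟨r0, _, f0, τ0, hτ0, hb0, hbd0⟩ := hadm
    have hunb := fun i =>
      (HtriProof.triangle_key σ τ0 hτ0 f0 hb0 (fun e => (hbd0 e).1) i).1
    exact ⟨HtriProof.int_flow ht σ hunb, HtriProof.real_flow ht σ hunb⟩
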